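/- For m ≥ 1 and any q, k ∈ ℝ^m, the family (Φ(q)_{(p,f)} · Φ(k)_{(p,f)})_{(p,f) ∈ I} is summable and Σ_{(p,f) ∈ I} Φ(q)_{(p,f)} Φ(k)_{(p,f)} = e^{qᵀk}. Hence the exponential kernel e^{qᵀk} appearing in softmax attention is the ℓ² inner product of the infinite-dimensional feature vectors Φ(q) and Φ(k), and consequently Σ_{j=0}^{i} e^{q_iᵀk_j} = Σ_{j=0}^{i} ⟨Φ(q_i), Φ(k_j)⟩ for any sequences of queries and keys. -/

import Mathlib

open Matrix

/-- The index set `I = {(p, f) : p ∈ ℕ, f : Fin p → Fin m}` of the infinite-dimensional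
softmax feature map. -/
def FeatIdx (m : ℕ) : Type := Σ p : ℕ, Fin p → Fin m

/-- The feature map `Φ(x)_{(p,f)} = (p!)^{-1/2} ∏_{j<p} x_{f j}`. -/
noncomputable def featMap (m : ℕ) (x : Fin m → ℝ) (i : FeatIdx m) : ℝ :=
  ((i.1.factorial : ℝ) ^ (-(1 / 2 : ℝ))) * ∏ j : Fin i.1, x (i.2 j)

lemma featMap_mul (m : ℕ) (q k : Fin m → ℝ) (i : FeatIdx m) :
    featMap m q i * featMap m k i
      = ((i.1.factorial : ℝ))⁻¹ * ∏ j : Fin i.1, (q (i.2 j) * k (i.2 j)) := by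
  have hpos : (0 : ℝ) < (i.1.factorial : ℝ) := by positivity
  have hc : ((i.1.factorial : ℝ) ^ (-(1 / 2 : ℝ))) * ((i.1.factorial : ℝ) ^ (-(1 / 2 : ℝ)))
      = ((i.1.factorial : ℝ))⁻¹ := by
    rw [← Real.rpow_add hpos]
    norm_num
    exact Real.rpow_neg_one _
  rw [featMap, featMap, mul_mul_mul_comm, hc, Finset.prod_mul_distrib]

lemma fiber_sum (m : ℕ) (g : Fin m → ℝ) (p : ℕ) :
    ∑ f : Fin p → Fin m, ((p.factorial : ℝ))⁻¹ * ∏ j : Fin p, g (f j)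
      = (∑ a, g a) ^ p / p.factorial := by
  rw [← Finset.mul_sum, ← Fintype.sum_pow]
  ring

/-- For `m ≥ 1` and any `q, k ∈ ℝ^m`, the family
`(Φ(q)_{(p,f)} Φ(k)_{(p,f)})` is summable with sum `e^{qᵀk}`: the exponential kernel of
softmax attention is the ℓ² inner product of the infinite-dimensional features `Φ(q)`,
`Φ(k)`. Consequently `Σ_{j=0}^{i} e^{q_iᵀ k_j} = Σ_{j=0}^{i} ⟨Φ(q_i), Φ(k_j)⟩` for any
sequences of queries and keys. -/
theorem softmax_kernel_is_inner_product_of_features (m : ℕ) (hm : 1 ≤ m) :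
    (∀ q k : Fin m → ℝ,
      Summable (fun i : FeatIdx m => featMap m q i * featMap m k i) ∧
      ∑' i : FeatIdx m, featMap m q i * featMap m k i = Real.exp (q ⬝ᵥ k)) ∧
    (∀ (qs ks : ℕ → Fin m → ℝ) (i : ℕ),
      ∑ j ∈ Finset.range (i + 1), Real.exp (qs i ⬝ᵥ ks j) =
      ∑ j ∈ Finset.range (i + 1),
        ∑' idx : FeatIdx m, featMap m (qs i) idx * featMap m (ks j) idx) := by
  have main : ∀ q k : Fin m → ℝ,
      Summable (fun i : FeatIdx m => featMap m q i * featMap m k i) ∧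
      ∑' i : FeatIdx m, featMap m q i * featMap m k i = Real.exp (q ⬝ᵥ k) := by
    intro q k
    set g : Fin m → ℝ := fun a => q a * k a with hg
    -- summability via absolute values
    have habs : Summable (fun i : (Σ p : ℕ, Fin p → Fin m) =>
        |featMap m q i * featMap m k i|) := by
      apply summable_sigma_of_nonneg (fun _ => abs_nonneg _) |>.2
      constructor
      · intro p; exact Summable.of_finite
      · have : (fun p : ℕ => ∑' f : Fin p → Fin m,
            |featMap m q ⟨p, f⟩ * featMap m k ⟨p, f⟩|)
            = fun p : ℕ => (∑ a, |g a|) ^ p / p.factorial := by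
          funext p
          rw [tsum_fintype]
          have : ∀ f : Fin p → Fin m, |featMap m q ⟨p, f⟩ * featMap m k ⟨p, f⟩|
              = ((p.factorial : ℝ))⁻¹ * ∏ j : Fin p, |g (f j)| := by
            intro f
            rw [featMap_mul m q k (⟨p, f⟩ : FeatIdx m)]
            rw [abs_mul, abs_of_nonneg (by positivity : (0:ℝ) ≤ ((p.factorial:ℝ))⁻¹),
              Finset.abs_prod]
          simp_rw [this]
          exact fiber_sum m (fun a => |g a|) p
        rw [this]
        exact Real.summable_pow_div_factorial _
    have hsum : Summable (fun i : FeatIdx m => featMap m q i * featMap m k i) :=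
      (habs : Summable _).of_abs
    refine ⟨hsum, ?_⟩
    have hsig : ∑' i : (Σ p : ℕ, Fin p → Fin m), featMap m q i * featMap m k i
        = ∑' (p : ℕ) (f : Fin p → Fin m), featMap m q ⟨p, f⟩ * featMap m k ⟨p, f⟩ :=
      Summable.tsum_sigma (by exact hsum)
    have hfib : ∀ p : ℕ, ∑' f : Fin p → Fin m, featMap m q ⟨p, f⟩ * featMap m k ⟨p, f⟩
        = (∑ a, g a) ^ p / p.factorial := by
      intro p
      rw [tsum_fintype]
      simp_rw [fun f : Fin p → Fin m => featMap_mul m q k (⟨p, f⟩ : FeatIdx m)]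
      exact fiber_sum m g p
    have hdot : q ⬝ᵥ k = ∑ a, g a := rfl
    calc ∑' i : FeatIdx m, featMap m q i * featMap m k i
        = ∑' (p : ℕ) (f : Fin p → Fin m), featMap m q ⟨p, f⟩ * featMap m k ⟨p, f⟩ := hsig
      _ = ∑' p : ℕ, (∑ a, g a) ^ p / p.factorial := by simp_rw [hfib]
      _ = Real.exp (∑ a, g a) := by
          rw [Real.exp_eq_exp_ℝ, NormedSpace.exp_eq_tsum_div]
      _ = Real.exp (q ⬝ᵥ k) := by rw [hdot]
  refine ⟨main, ?_⟩
  intro qs ks i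
  exact Finset.sum_congr rfl fun j _ => ((main (qs i) (ks j)).2).symm
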